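/- Let q be a prime power and m, h, η positive integers with 1 ≤ η ≤ h. Let a ∈ F_{q^m} with a ≠ 0 and let β_1, …, β_η ∈ F_{q^m}. Let M ∈ F_{q^m}^{h×η} be the matrix whose entry in row u (for u = 0, 1, …, h−1) and column j is β_j^{q^u}·N_u(a). Then the rank of M equals the dimension over F_q of the F_q-linear subspace of F_{q^m} spanned by β_1, …, β_η. -/

import Mathlib

open Polynomial Module Submodule Matrix

lemma aux_charP {K : Type} [Field K] [Fintype K] {p n : ℕ} (hp : p.Prime)
    (h : Fintype.card K = p ^ n) : CharP K p := by
  have hprime : (ringChar K).Prime := CharP.char_is_prime K (ringChar K)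
  have hdvd : ringChar K ∣ p ^ n := by
    rw [← h]
    exact (CharP.cast_eq_zero_iff K (ringChar K) _).mp (FiniteField.cast_card_eq_zero K)
  have h1 : ringChar K = p :=
    (Nat.prime_dvd_prime_iff_eq hprime hp).mp (hprime.dvd_of_dvd_pow hdvd)
  rw [← h1]; exact ringChar.charP K

lemma moore_indep {q h : ℕ} (hq2 : 2 ≤ q) {Fq K : Type} [Field Fq] [Field K]
    [Fintype Fq] [Fintype K] [Algebra Fq K]
    (hcardFq : Fintype.card Fq = q)
    (ψ : ℕ → (K →ₗ[Fq] K)) (hψ : ∀ n x, ψ n x = x ^ q ^ n)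
    (b : Set K) [Fintype b] (hb : LinearIndependent Fq ((↑) : b → K))
    (hcard : Fintype.card b ≤ h)
    (a : K) (ha : a ≠ 0) :
    LinearIndependent K (fun (x : b) (u : Fin h) =>
      (x : K) ^ q ^ (u : ℕ) * a ^ ((q ^ (u : ℕ) - 1) / (q - 1))) := by
  classical
  rw [Fintype.linearIndependent_iff]
  intro g hg
  by_contra hcon
  push_neg at hcon
  obtain ⟨i0, hi0⟩ := hcon
  set d := Fintype.card b with hd
  have hd1 : 0 < d := Fintype.card_pos_iff.mpr ⟨i0⟩
  let e : Fin d ≃ b := (Fintype.equivFin b).symm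
  -- the column relations
  have hS : ∀ u : Fin h, (∑ x : b, g x * (x : K) ^ q ^ (u : ℕ)) = 0 := by
    intro u
    have h1 := congrFun hg u
    simp only [Finset.sum_apply, Pi.smul_apply, smul_eq_mul, Pi.zero_apply] at h1
    have h2 : (∑ x : b, g x * (x : K) ^ q ^ (u : ℕ)) *
        a ^ ((q ^ (u : ℕ) - 1) / (q - 1)) = 0 := by
      rw [Finset.sum_mul, ← h1]
      exact Finset.sum_congr rfl fun x _ => by ring
    exact (mul_eq_zero.mp h2).resolve_right (pow_ne_zero _ ha)
  -- the square Moore matrix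
  let A : Matrix (Fin d) (Fin d) K := fun u i => (e i : K) ^ q ^ (u : ℕ)
  have hAv : A.mulVec (g ∘ e) = 0 := by
    funext u
    have h3 : (∑ x : b, g x * (x : K) ^ q ^ (u : ℕ)) = 0 := by
      simpa using hS (Fin.castLE hcard u)
    simp only [Matrix.mulVec, dotProduct, Function.comp_apply, Pi.zero_apply, A]
    calc (∑ x : Fin d, (e x : K) ^ q ^ (u : ℕ) * g (e x))
        = ∑ x : b, (x : K) ^ q ^ (u : ℕ) * g x :=
          Equiv.sum_comp e (fun x => (x : K) ^ q ^ (u : ℕ) * g x)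
      _ = 0 := by rw [← h3]; exact Finset.sum_congr rfl fun x _ => mul_comm _ _
  have hdet : A.det = 0 := by
    rw [← Matrix.exists_mulVec_eq_zero_iff]
    refine ⟨g ∘ e, ?_, hAv⟩
    intro h0
    exact hi0 (by simpa using congrFun h0 (e.symm i0))
  obtain ⟨μ, hμ0, hμ⟩ : ∃ v ≠ 0, Aᵀ.mulVec v = 0 := by
    rw [Matrix.exists_mulVec_eq_zero_iff, Matrix.det_transpose]; exact hdet
  have hrow : ∀ x : b, (∑ u : Fin d, μ u * (x : K) ^ q ^ (u : ℕ)) = 0 := by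
    intro x
    have h1 := congrFun hμ (e.symm x)
    simp only [Matrix.mulVec, dotProduct, Matrix.transpose_apply, Pi.zero_apply, A,
      Equiv.apply_symm_apply] at h1
    rw [← h1]
    exact Finset.sum_congr rfl fun u _ => by
      show _ = (e (e.symm x) : K) ^ q ^ (u : ℕ) * μ u; rw [Equiv.apply_symm_apply, mul_comm]
  -- the q-polynomial
  set L : K →ₗ[Fq] K := ∑ u : Fin d, μ u • ψ (u : ℕ) with hL
  have hLapply : ∀ x : K, L x = ∑ u : Fin d, μ u * x ^ q ^ (u : ℕ) := by
    intro x
    simp [hL, LinearMap.sum_apply, hψ]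
  have hker : (span Fq b : Submodule Fq K) ≤ LinearMap.ker L := by
    rw [span_le]
    intro x hx
    simp only [SetLike.mem_coe, LinearMap.mem_ker]
    rw [hLapply]
    exact hrow ⟨x, hx⟩
  set P : K[X] := ∑ u : Fin d, C (μ u) * X ^ q ^ (u : ℕ) with hP
  obtain ⟨u0, hu0⟩ := Function.ne_iff.mp hμ0
  have hpowinj : Function.Injective fun u : Fin d => q ^ (u : ℕ) :=
    fun u v huv => Fin.val_injective (Nat.pow_right_injective hq2 huv)
  have hPcoeff : P.coeff (q ^ (u0 : ℕ)) = μ u0 := by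
    simp only [hP, Polynomial.finset_sum_coeff, Polynomial.coeff_C_mul, Polynomial.coeff_X_pow]
    rw [Finset.sum_eq_single u0]
    · simp
    · intro u _ hu
      rw [if_neg (hpowinj.ne (Ne.symm hu)), mul_zero]
    · simp
  have hPne : P ≠ 0 := by
    intro h0
    rw [h0, Polynomial.coeff_zero] at hPcoeff
    exact hu0 hPcoeff.symm
  have hdeg : P.natDegree ≤ q ^ (d - 1) := by
    refine Polynomial.natDegree_sum_le_of_forall_le _ _ fun u _ => ?_
    refine (Polynomial.natDegree_C_mul_X_pow_le _ _).trans ?_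
    exact Nat.pow_le_pow_right (by omega) (by omega)
  -- root counting
  set V' : Submodule Fq K := span Fq b with hV'
  haveI : Fintype (V' : Set K) := Set.Finite.fintype (Set.toFinite _)
  have hroots : ∀ x ∈ (V' : Set K).toFinset, P.IsRoot x := by
    intro x hx
    rw [Set.mem_toFinset] at hx
    have hLx : L x = 0 := hker hx
    rw [hLapply] at hLx
    simp only [Polynomial.IsRoot, hP, Polynomial.eval_finset_sum, Polynomial.eval_mul,
      Polynomial.eval_C, Polynomial.eval_pow, Polynomial.eval_X]
    exact hLx
  have hsub : (V' : Set K).toFinset ⊆ P.roots.toFinset := by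
    intro x hx
    rw [Multiset.mem_toFinset, Polynomial.mem_roots hPne]
    exact hroots x hx
  have hcardV : (V' : Set K).toFinset.card = q ^ d := by
    rw [Set.toFinset_card]
    have h1 : Fintype.card (V' : Set K) = Fintype.card Fq ^ finrank Fq V' :=
      card_eq_pow_finrank
    have h2 : finrank Fq V' = d := by
      rw [hV', finrank_span_set_eq_card hb, Set.toFinset_card]
    rw [h1, h2, hcardFq]
  have hfinal : q ^ d ≤ q ^ (d - 1) := by
    rw [← hcardV]
    calc (V' : Set K).toFinset.card ≤ P.roots.toFinset.card := Finset.card_le_card hsub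
      _ ≤ Multiset.card P.roots := Multiset.toFinset_card_le _
      _ ≤ P.natDegree := Polynomial.card_roots' P
      _ ≤ q ^ (d - 1) := hdeg
  exact absurd hfinal (by
    have := Nat.pow_lt_pow_right (by omega : 1 < q) (by omega : d - 1 < d)
    omega)

theorem extended_moore_rank_eq_finrank_span
    (q m h η : ℕ) (hq : IsPrimePow q) (hm : 0 < m) (hh : 0 < h)
    (hη : 1 ≤ η) (hηh : η ≤ h)
    (Fq K : Type) [Field Fq] [Field K] [Fintype Fq] [Fintype K] [Algebra Fq K]
    (hcardFq : Fintype.card Fq = q) (hcardK : Fintype.card K = q ^ m)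
    (a : K) (ha : a ≠ 0) (β : Fin η → K)
    (M : Matrix (Fin h) (Fin η) K)
    (hM : ∀ (u : Fin h) (j : Fin η),
      M u j = β j ^ q ^ (u : ℕ) * a ^ ((q ^ (u : ℕ) - 1) / (q - 1))) :
    M.rank = Module.finrank Fq ↥(Submodule.span Fq (Set.range β)) := by
  classical
  have hq2 : 2 ≤ q := hq.two_le
  obtain ⟨p, k, hp, hk, hpk⟩ := hq
  have hp' : p.Prime := Nat.prime_iff.mpr hp
  haveI : Fact p.Prime := ⟨hp'⟩
  haveI : CharP K p := aux_charP hp' (n := k * m)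
    (by rw [hcardK, ← hpk, ← pow_mul])
  have hfrob : ∀ (n : ℕ) (x y : K), (x + y) ^ q ^ n = x ^ q ^ n + y ^ q ^ n := by
    intro n x y
    have hqe : q ^ n = p ^ (k * n) := by rw [← hpk, pow_mul]
    rw [hqe]
    exact add_pow_char_pow x y p (k * n)
  have hconst : ∀ (c : Fq) (n : ℕ), c ^ q ^ n = c := by
    intro c n
    rw [← hcardFq]
    exact FiniteField.pow_card_pow n c
  let ψ : ℕ → (K →ₗ[Fq] K) := fun n =>
    { toFun := fun x => x ^ q ^ n
      map_add' := fun x y => hfrob n x y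
      map_smul' := by
        intro c x
        simp only [RingHom.id_apply, Algebra.smul_def, mul_pow, ← map_pow, hconst] }
  have hψ : ∀ n x, ψ n x = x ^ q ^ n := fun n x => rfl
  let Φ : K →ₗ[Fq] (Fin h → K) :=
    LinearMap.pi (fun u : Fin h => a ^ ((q ^ (u : ℕ) - 1) / (q - 1)) • ψ (u : ℕ))
  have hΦ : ∀ (x : K) (u : Fin h),
      Φ x u = x ^ q ^ (u : ℕ) * a ^ ((q ^ (u : ℕ) - 1) / (q - 1)) := by
    intro x u
    simp [Φ, ψ, mul_comm]
  set S : Set K := Set.range β with hSdef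
  obtain ⟨bs, hbsS, hspan, hbli⟩ := exists_linearIndependent Fq S
  haveI : Fintype bs := Set.Finite.fintype ((Set.finite_range β).subset hbsS)
  have hdim : finrank Fq ↥(span Fq S) = Fintype.card bs := by
    rw [← hspan, finrank_span_set_eq_card hbli, Set.toFinset_card]
  have hle : Fintype.card bs ≤ h := by
    haveI : Fintype S := Set.Finite.fintype (Set.finite_range β)
    have h1 : finrank Fq ↥(span Fq S) ≤ η := by
      refine (finrank_span_le_card S).trans ?_
      rw [Set.toFinset_card]
      have := Fintype.card_range_le β
      simpa using this
    omega
  have hli := moore_indep hq2 hcardFq ψ hψ bs hbli hle a ha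
  have hli' : LinearIndependent K (fun x : bs => Φ (x : K)) := by
    have heq : (fun x : bs => Φ (x : K)) = fun (x : bs) (u : Fin h) =>
        (x : K) ^ q ^ (u : ℕ) * a ^ ((q ^ (u : ℕ) - 1) / (q - 1)) := by
      funext x u; exact hΦ x u
    rw [heq]; exact hli
  rw [Matrix.rank_eq_finrank_span_cols]
  have hMT : Set.range Mᵀ = Set.range (fun j => Φ (β j)) := by
    have : Mᵀ = fun j => Φ (β j) := by
      funext j u
      rw [Matrix.transpose_apply, hM, hΦ]
    rw [this]
  rw [show Set.range M.col = Set.range Mᵀ from rfl, hMT]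
  have hspanK : span K (Set.range fun j => Φ (β j)) = span K (Φ '' bs) := by
    apply le_antisymm
    · rw [span_le]
      rintro _ ⟨j, rfl⟩
      have hβj : β j ∈ span Fq bs := by
        rw [hspan]; exact subset_span ⟨j, rfl⟩
      have h1 : Φ (β j) ∈ Submodule.map Φ (span Fq bs) := ⟨β j, hβj, rfl⟩
      rw [Submodule.map_span] at h1
      exact Submodule.span_le_restrictScalars Fq K (Φ '' bs) h1
    · rw [span_le]
      rintro _ ⟨x, hx, rfl⟩
      obtain ⟨j, hj⟩ := hbsS hx
      exact subset_span ⟨j, show Φ (β j) = Φ x by rw [hj]⟩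
  rw [hspanK]
  have himg : Φ '' bs = Set.range (fun x : bs => Φ (x : K)) := Set.image_eq_range _ _
  rw [himg, finrank_span_eq_card hli', hdim]
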